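/- Let E be a Hopf algebra, A an E-module algebra, B = A∗E. A right E-linear map f: B → B automatically satisfies the braided left E-linearity relation f(wb) = w_1 (w_2 · f)(b) for all w ∈ E and b ∈ B, where (w·f)(b) := w_1 · f(S^{-1}(w_2)·b) and · is the adjoint action S(u_1) b u_2. -/

import Mathlib

/-!
STATEMENT 17: Let `E` be a Hopf algebra, `A` an `E`-module algebra, `B = A∗E`.
A right `E`-linear map `f : B → B` automatically satisfies the braided left
`E`-linearity relation `f(w b) = w₁ ((w₂ • f)(b))`, where
`(w • f)(b) := w₁ · f(S⁻¹(w₂) · b)` and `·` is the adjoint action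
`u · b = S(u₁) b u₂`.
-/

open TensorProduct

/-- The action of `E` on `M` as a linear map into `k`-endomorphisms. -/
def endoAct (k E M : Type*) [CommRing k] [Ring E] [Algebra k E] [AddCommGroup M]
    [Module k M] [Module E M] [IsScalarTower k E M] [SMulCommClass E k M] :
    E →ₗ[k] Module.End k M where
  toFun h :=
    { toFun := fun m => h • m
      map_add' := fun a b => smul_add h a b
      map_smul' := fun c m => smul_comm h c m }
  map_add' h h' := LinearMap.ext fun m => add_smul h h' m
  map_smul' c h := LinearMap.ext fun m => smul_assoc c h m

/-- The componentwise action of `E ⊗ E` on `M ⊗ N`. -/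
noncomputable def actT (k E M N : Type*) [CommRing k] [Ring E] [Algebra k E]
    [AddCommGroup M] [Module k M] [Module E M] [IsScalarTower k E M] [SMulCommClass E k M]
    [AddCommGroup N] [Module k N] [Module E N] [IsScalarTower k E N] [SMulCommClass E k N] :
    E ⊗[k] E →ₗ[k] Module.End k (M ⊗[k] N) :=
  (TensorProduct.homTensorHomMap (RingHom.id k) M N M N) ∘ₗ
    (TensorProduct.map (endoAct k E M) (endoAct k E N))

/-- The multiplication of the smash product `A∗E`:
`(a ⊗ w)(a' ⊗ w') = a (w₁ • a') ⊗ w₂ w'`. -/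
noncomputable def smashMulMap (k E A : Type*) [CommRing k] [Ring E] [HopfAlgebra k E]
    [Ring A] [Algebra k A] [Module E A] [IsScalarTower k E A] [SMulCommClass E k A] :
    (A ⊗[k] E) ⊗[k] (A ⊗[k] E) →ₗ[k] A ⊗[k] E :=
  (TensorProduct.map (LinearMap.mul' k A) LinearMap.id) ∘ₗ
    (TensorProduct.assoc k A A E).symm.toLinearMap ∘ₗ
    (TensorProduct.map LinearMap.id
      (TensorProduct.map (TensorProduct.lift (endoAct k E A)) (LinearMap.mul' k E))) ∘ₗ
    (TensorProduct.map LinearMap.id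
      (TensorProduct.tensorTensorTensorComm k E E A E).toLinearMap) ∘ₗ
    (TensorProduct.assoc k A (E ⊗[k] E) (A ⊗[k] E)).toLinearMap ∘ₗ
    (TensorProduct.map
      (TensorProduct.map LinearMap.id (Coalgebra.comul (R := k) (A := E)))
      LinearMap.id)

/-- The inclusion `E → A∗E`, `w ↦ 1 ⊗ w`. -/
noncomputable def smashIncl (k E A : Type*) [CommRing k] [Ring E] [Algebra k E]
    [Ring A] [Algebra k A] : E →ₗ[k] A ⊗[k] E :=
  TensorProduct.mk k A E 1

/-- The (right) adjoint action of `E` on `B = A∗E`: `u ⊗ b ↦ S(u₁) b u₂`. -/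
noncomputable def adjAct (k E A : Type*) [CommRing k] [Ring E] [HopfAlgebra k E]
    [Ring A] [Algebra k A] [Module E A] [IsScalarTower k E A] [SMulCommClass E k A] :
    E ⊗[k] (A ⊗[k] E) →ₗ[k] A ⊗[k] E :=
  (smashMulMap k E A) ∘ₗ
    (TensorProduct.map (smashIncl k E A) LinearMap.id) ∘ₗ
    (TensorProduct.map LinearMap.id
      ((smashMulMap k E A) ∘ₗ (TensorProduct.map LinearMap.id (smashIncl k E A)))) ∘ₗ
    (TensorProduct.map LinearMap.id (TensorProduct.comm k E (A ⊗[k] E)).toLinearMap) ∘ₗ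
    (TensorProduct.map (HopfAlgebra.antipode (R := k) (A := E)) LinearMap.id) ∘ₗ
    (TensorProduct.assoc k E E (A ⊗[k] E)).toLinearMap ∘ₗ
    (TensorProduct.map (Coalgebra.comul (R := k) (A := E)) LinearMap.id)


namespace ST17
open TensorProduct Coalgebra
set_option synthInstance.maxHeartbeats 400000
set_option maxHeartbeats 1000000
set_option linter.unusedSectionVars false

variable {k E M : Type*} [CommRing k] [Ring E] [HopfAlgebra k E] [Ring M] [Algebra k M]

/-- convolution product on `Hom_k(E, M)` -/
noncomputable def conv (g h : E →ₗ[k] M) : E →ₗ[k] M :=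
  LinearMap.mul' k M ∘ₗ TensorProduct.map g h ∘ₗ comul

/-- co-opposite convolution: `u ↦ Σ h(u₂) * g(u₁)` -/
noncomputable def convOp (g h : E →ₗ[k] M) : E →ₗ[k] M :=
  LinearMap.mul' k M ∘ₗ TensorProduct.map h g ∘ₗ (TensorProduct.comm k E E).toLinearMap ∘ₗ comul

/-- convolution unit -/
noncomputable def cunit : E →ₗ[k] M := Algebra.linearMap k M ∘ₗ counit

lemma conv_apply (g h : E →ₗ[k] M) (u : E) :
    conv g h u = LinearMap.mul' k M (TensorProduct.map g h (comul u)) := rfl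

lemma convOp_apply (g h : E →ₗ[k] M) (u : E) :
    convOp g h u = LinearMap.mul' k M (TensorProduct.map h g
      (TensorProduct.comm k E E (comul u))) := rfl

lemma map_conv_right (g h j : E →ₗ[k] M) :
    TensorProduct.map g (conv h j) =
      TensorProduct.map g (LinearMap.mul' k M ∘ₗ TensorProduct.map h j) ∘ₗ
        (comul (R := k) (A := E)).lTensor E := by
  rw [LinearMap.lTensor, ← TensorProduct.map_comp, LinearMap.comp_id]; rfl

lemma map_conv_left (g h j : E →ₗ[k] M) :
    TensorProduct.map (conv g h) j =
      TensorProduct.map (LinearMap.mul' k M ∘ₗ TensorProduct.map g h) j ∘ₗ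
        (comul (R := k) (A := E)).rTensor E := by
  rw [LinearMap.rTensor, ← TensorProduct.map_comp, LinearMap.comp_id]; rfl

lemma map_convOp_right (g h j : E →ₗ[k] M) :
    TensorProduct.map g (convOp h j) =
      TensorProduct.map g (LinearMap.mul' k M ∘ₗ TensorProduct.map j h ∘ₗ
        (TensorProduct.comm k E E).toLinearMap) ∘ₗ (comul (R := k) (A := E)).lTensor E := by
  rw [LinearMap.lTensor, ← TensorProduct.map_comp, LinearMap.comp_id]; rfl

lemma conv_assoc (g h j : E →ₗ[k] M) : conv (conv g h) j = conv g (conv h j) := by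
  apply LinearMap.ext; intro u
  have key : (comul (R := k) (A := E)).lTensor E (comul u) =
      (TensorProduct.assoc k E E E).toLinearMap
        ((comul (R := k) (A := E)).rTensor E (comul u)) :=
    (Coalgebra.coassoc_apply u).symm
  rw [conv_apply, conv_apply, map_conv_left, map_conv_right, LinearMap.comp_apply,
    LinearMap.comp_apply, key]
  generalize (comul (R := k) (A := E)).rTensor E (comul u) = t
  induction t using TensorProduct.induction_on with
  | zero => simp
  | add x y hx hy => simp [map_add, hx, hy]
  | tmul x z =>
    induction x using TensorProduct.induction_on with
    | zero => simp
    | add a b ha hb => simp only [add_tmul, map_add] at *; rw [ha, hb]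
    | tmul a b => simp [mul_assoc]

/-- mixed associativity, assuming the two "outer" maps commute pointwise -/
lemma conv_convOp (g h j : E →ₗ[k] M) (hcomm : ∀ x y, j x * h y = h y * j x) :
    conv g (convOp h j) = conv (conv g h) j := by
  apply LinearMap.ext; intro u
  have key : (comul (R := k) (A := E)).lTensor E (comul u) =
      (TensorProduct.assoc k E E E).toLinearMap
        ((comul (R := k) (A := E)).rTensor E (comul u)) :=
    (Coalgebra.coassoc_apply u).symm
  rw [conv_apply, conv_apply, map_conv_left, map_convOp_right, LinearMap.comp_apply,
    LinearMap.comp_apply, key]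
  generalize (comul (R := k) (A := E)).rTensor E (comul u) = t
  induction t using TensorProduct.induction_on with
  | zero => simp only [map_zero]
  | add x y hx hy => simp only [map_add, hx, hy]
  | tmul x z =>
    induction x using TensorProduct.induction_on with
    | zero => simp only [zero_tmul, map_zero]
    | add a b ha hb => simp only [add_tmul, map_add] at *; rw [ha, hb]
    | tmul a b =>
      simp only [LinearEquiv.coe_coe, LinearMap.comp_apply, TensorProduct.assoc_tmul,
        TensorProduct.comm_tmul, TensorProduct.map_tmul, LinearMap.mul'_apply]
      rw [mul_assoc, hcomm]

lemma conv_cunit_left (g : E →ₗ[k] M) : conv cunit g = g := by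
  apply LinearMap.ext; intro u
  have h1 : TensorProduct.map (cunit (k := k) (E := E) (M := M)) g =
      TensorProduct.map (Algebra.linearMap k M) g ∘ₗ (counit (R := k) (A := E)).rTensor E := by
    rw [LinearMap.rTensor, ← TensorProduct.map_comp, LinearMap.comp_id]; rfl
  rw [conv_apply, h1, LinearMap.comp_apply, Coalgebra.rTensor_counit_comul]
  simp

lemma conv_cunit_right (g : E →ₗ[k] M) : conv g cunit = g := by
  apply LinearMap.ext; intro u
  have h1 : TensorProduct.map g (cunit (k := k) (E := E) (M := M)) =
      TensorProduct.map g (Algebra.linearMap k M) ∘ₗ (counit (R := k) (A := E)).lTensor E := by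
    rw [LinearMap.lTensor, ← TensorProduct.map_comp, LinearMap.comp_id]; rfl
  rw [conv_apply, h1, LinearMap.comp_apply, Coalgebra.lTensor_counit_comul]
  simp [Algebra.algebraMap_eq_smul_one, mul_smul_comm]

/-- if `ℓ` is multiplicative and unital, then `ℓ∘S` is its right convolution inverse -/
lemma conv_antipode_right (ℓ : E →ₗ[k] M)
    (hmul : LinearMap.mul' k M ∘ₗ TensorProduct.map ℓ ℓ = ℓ ∘ₗ LinearMap.mul' k E)
    (hone : ℓ ∘ₗ Algebra.linearMap k E = Algebra.linearMap k M) :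
    conv ℓ (ℓ ∘ₗ HopfAlgebra.antipode (R := k)) = cunit := by
  have h1 : TensorProduct.map ℓ (ℓ ∘ₗ HopfAlgebra.antipode (R := k) (A := E)) =
      TensorProduct.map ℓ ℓ ∘ₗ (HopfAlgebra.antipode (R := k) (A := E)).lTensor E := by
    rw [LinearMap.lTensor, ← TensorProduct.map_comp, LinearMap.comp_id]
  show LinearMap.mul' k M ∘ₗ TensorProduct.map ℓ (ℓ ∘ₗ _) ∘ₗ comul = _
  rw [h1, ← LinearMap.comp_assoc, ← LinearMap.comp_assoc, hmul, LinearMap.comp_assoc,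
    LinearMap.comp_assoc, HopfAlgebra.mul_antipode_lTensor_comul, ← LinearMap.comp_assoc, hone]
  rfl

lemma comm_map {P Q P' Q' : Type*} [AddCommGroup P] [AddCommGroup Q] [AddCommGroup P']
    [AddCommGroup Q'] [Module k P] [Module k Q] [Module k P'] [Module k Q']
    (f : P →ₗ[k] P') (g : Q →ₗ[k] Q') :
    (TensorProduct.comm k P' Q').toLinearMap ∘ₗ TensorProduct.map f g =
      TensorProduct.map g f ∘ₗ (TensorProduct.comm k P Q).toLinearMap :=
  TensorProduct.ext' fun x y => by simp

variable (k E) in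
/-- `Δ` is multiplicative, point-free form. -/
lemma mul'_map_comul :
    LinearMap.mul' k (E ⊗[k] E) ∘ₗ TensorProduct.map comul comul =
      (comul (R := k) (A := E)) ∘ₗ LinearMap.mul' k E :=
  TensorProduct.ext' fun x y => by simp

variable (k E) in
lemma comul_linearMap :
    (comul (R := k) (A := E)) ∘ₗ Algebra.linearMap k E = Algebra.linearMap k (E ⊗[k] E) :=
  LinearMap.ext fun r => by simp

variable (k E) in
noncomputable def lmk : E →ₗ[k] E ⊗[k] E := TensorProduct.mk k E E 1

variable (k E) in
noncomputable def rmk : E →ₗ[k] E ⊗[k] E := (TensorProduct.mk k E E).flip 1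

lemma lmk_mul' :
    LinearMap.mul' k (E ⊗[k] E) ∘ₗ TensorProduct.map (lmk k E) (lmk k E) =
      lmk k E ∘ₗ LinearMap.mul' k E :=
  TensorProduct.ext' fun x y => by simp [lmk, Algebra.TensorProduct.tmul_mul_tmul]

lemma rmk_mul' :
    LinearMap.mul' k (E ⊗[k] E) ∘ₗ TensorProduct.map (rmk k E) (rmk k E) =
      rmk k E ∘ₗ LinearMap.mul' k E :=
  TensorProduct.ext' fun x y => by simp [rmk, Algebra.TensorProduct.tmul_mul_tmul]

lemma lmk_one : lmk k E ∘ₗ Algebra.linearMap k E = Algebra.linearMap k (E ⊗[k] E) :=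
  LinearMap.ext fun r => by
    simp [lmk, Algebra.TensorProduct.algebraMap_apply' r]

lemma rmk_one : rmk k E ∘ₗ Algebra.linearMap k E = Algebra.linearMap k (E ⊗[k] E) :=
  LinearMap.ext fun r => by
    simp [rmk, Algebra.TensorProduct.algebraMap_apply r]


local notation "Sₑ" => HopfAlgebra.antipode (R := k) (A := E)

variable (k E) in
lemma comul_conv : (comul (R := k) (A := E)) = conv (rmk k E) (lmk k E) := by
  apply LinearMap.ext; intro u
  rw [conv_apply]
  conv_lhs => rw [show (comul (R := k) u) = id (comul (R := k) u) from rfl]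
  generalize (comul (R := k) (A := E)) u = t
  induction t using TensorProduct.induction_on with
  | zero => simp only [map_zero, id]
  | add x y hx hy => simp only [map_add, hx, hy, id] at *; rw [← hx, ← hy]
  | tmul x y =>
    simp [lmk, rmk, Algebra.TensorProduct.tmul_mul_tmul]

variable (k E) in
lemma T_conv :
    (TensorProduct.comm k E E).toLinearMap ∘ₗ TensorProduct.map Sₑ Sₑ ∘ₗ comul =
      conv (lmk k E ∘ₗ Sₑ) (rmk k E ∘ₗ Sₑ) := by
  apply LinearMap.ext; intro u
  rw [conv_apply, LinearMap.comp_apply, LinearMap.comp_apply]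
  have h1 : TensorProduct.map (lmk k E ∘ₗ Sₑ) (rmk k E ∘ₗ Sₑ) =
      TensorProduct.map (lmk k E) (rmk k E) ∘ₗ TensorProduct.map Sₑ Sₑ :=
    (TensorProduct.map_comp _ _ _ _)
  rw [h1, LinearMap.comp_apply]
  generalize (TensorProduct.map Sₑ Sₑ) ((comul (R := k) (A := E)) u) = t
  induction t using TensorProduct.induction_on with
  | zero => simp only [map_zero]
  | add x y hx hy => simp only [map_add, hx, hy]
  | tmul x y => simp [lmk, rmk, Algebra.TensorProduct.tmul_mul_tmul]

variable (k E) in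
lemma conv_comulS_comul :
    conv ((comul (R := k) (A := E)) ∘ₗ Sₑ) (comul (R := k) (A := E)) = cunit := by
  have h1 : TensorProduct.map ((comul (R := k) (A := E)) ∘ₗ Sₑ) (comul (R := k) (A := E)) =
      TensorProduct.map comul comul ∘ₗ (Sₑ).rTensor E := by
    rw [LinearMap.rTensor, ← TensorProduct.map_comp, LinearMap.comp_id]
  show LinearMap.mul' k (E ⊗[k] E) ∘ₗ _ ∘ₗ comul = _
  rw [h1]
  simp only [← LinearMap.comp_assoc]
  rw [mul'_map_comul]
  simp only [LinearMap.comp_assoc]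
  rw [HopfAlgebra.mul_antipode_rTensor_comul, ← LinearMap.comp_assoc, comul_linearMap]
  rfl

variable (k E) in
lemma comul_antipode :
    (comul (R := k) (A := E)) ∘ₗ Sₑ =
      (TensorProduct.comm k E E).toLinearMap ∘ₗ TensorProduct.map Sₑ Sₑ ∘ₗ comul := by
  have h2 : conv (comul (R := k) (A := E))
      ((TensorProduct.comm k E E).toLinearMap ∘ₗ TensorProduct.map Sₑ Sₑ ∘ₗ comul) = cunit := by
    rw [T_conv, comul_conv k E, conv_assoc, ← conv_assoc (lmk k E)]
    rw [conv_antipode_right (lmk k E) lmk_mul' lmk_one, conv_cunit_left,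
      conv_antipode_right (rmk k E) rmk_mul' rmk_one]
  calc (comul (R := k) (A := E)) ∘ₗ Sₑ
      = conv ((comul (R := k) (A := E)) ∘ₗ Sₑ) cunit := (conv_cunit_right _).symm
    _ = conv ((comul (R := k) (A := E)) ∘ₗ Sₑ) (conv (comul (R := k) (A := E))
        ((TensorProduct.comm k E E).toLinearMap ∘ₗ TensorProduct.map Sₑ Sₑ ∘ₗ comul)) := by
        rw [h2]
    _ = conv (conv ((comul (R := k) (A := E)) ∘ₗ Sₑ) (comul (R := k) (A := E)))
        ((TensorProduct.comm k E E).toLinearMap ∘ₗ TensorProduct.map Sₑ Sₑ ∘ₗ comul) :=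
        (conv_assoc _ _ _).symm
    _ = _ := by rw [conv_comulS_comul, conv_cunit_left]

variable (k E) in
lemma counit_antipode : (counit (R := k) (A := E)) ∘ₗ Sₑ = counit := by
  apply LinearMap.ext; intro u
  have h := congrArg (counit (R := k) (A := E))
    (HopfAlgebra.mul_antipode_rTensor_comul_apply (R := k) u)
  rw [Bialgebra.counit_algebraMap] at h
  have hcm : (counit (R := k) (A := E)) ∘ₗ LinearMap.mul' k E =
      LinearMap.mul' k k ∘ₗ TensorProduct.map counit counit :=
    TensorProduct.ext' fun x y => by simp
  rw [← LinearMap.comp_apply, hcm] at h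
  have hsplit : TensorProduct.map (counit (R := k) (A := E)) counit ∘ₗ (Sₑ).rTensor E
      = ((counit (R := k) (A := E)) ∘ₗ Sₑ).rTensor k ∘ₗ (counit (R := k) (A := E)).lTensor E := by
    rw [LinearMap.rTensor, LinearMap.rTensor, LinearMap.lTensor,
      ← TensorProduct.map_comp, ← TensorProduct.map_comp]
    congr 1 <;> simp
  rw [LinearMap.comp_apply, ← LinearMap.comp_apply (TensorProduct.map _ _), hsplit,
    LinearMap.comp_apply, Coalgebra.lTensor_counit_comul] at h
  simpa using h


lemma conv_mulLeft (g K : E →ₗ[k] M) (f' : M) (hcomm : ∀ x, g x * f' = f' * g x) :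
    conv g ((LinearMap.mulLeft k f') ∘ₗ K) = (LinearMap.mulLeft k f') ∘ₗ conv g K := by
  apply LinearMap.ext; intro u
  rw [LinearMap.comp_apply, conv_apply, conv_apply, LinearMap.mulLeft_apply]
  generalize (comul (R := k) (A := E)) u = t
  induction t using TensorProduct.induction_on with
  | zero => simp only [map_zero, mul_zero]
  | add x y hx hy => simp only [map_add, hx, hy, mul_add]
  | tmul x y =>
    simp only [TensorProduct.map_tmul, LinearMap.comp_apply, LinearMap.mul'_apply,
      LinearMap.mulLeft_apply]
    rw [← mul_assoc, hcomm, mul_assoc]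

variable {k E A : Type*} [CommRing k] [Ring E] [HopfAlgebra k E]
    [Ring A] [Algebra k A] [Module E A] [IsScalarTower k E A] [SMulCommClass E k A]

local notation "Sₑ" => HopfAlgebra.antipode (R := k) (A := E)

@[simp] lemma endoAct_apply (u : E) (m : A) : endoAct k E A u m = u • m := rfl

variable (k E A) in
noncomputable def Lmap : E →ₗ[k] Module.End k (A ⊗[k] E) :=
  (TensorProduct.homTensorHomMap (RingHom.id k) A E A E) ∘ₗ
    TensorProduct.map (endoAct k E A) (LinearMap.mul k E) ∘ₗ comul

variable (k E A) in
noncomputable def Rmap : E →ₗ[k] Module.End k (A ⊗[k] E) :=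
  (LinearMap.lTensorHom A) ∘ₗ (LinearMap.mul k E).flip

@[simp] lemma Rmap_apply (w : E) (a : A) (v : E) :
    Rmap k E A w (a ⊗ₜ[k] v) = a ⊗ₜ[k] (v * w) := rfl

lemma Lmap_def (u : E) : Lmap k E A u =
    (TensorProduct.homTensorHomMap (RingHom.id k) A E A E)
      ((TensorProduct.map (endoAct k E A) (LinearMap.mul k E)) (comul u)) := rfl

lemma smashMul_tmul (a a' : A) (u w' : E) :
    smashMulMap k E A ((a ⊗ₜ[k] u) ⊗ₜ[k] (a' ⊗ₜ[k] w')) =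
      TensorProduct.map ((LinearMap.mulLeft k a) ∘ₗ ((endoAct k E A).flip a'))
        (LinearMap.mulRight k w') (comul u) := by
  simp only [smashMulMap, LinearMap.comp_apply, TensorProduct.map_tmul, LinearMap.id_coe, id_eq]
  generalize (comul (R := k) (A := E)) u = c
  induction c using TensorProduct.induction_on with
  | zero => simp
  | add x y hx hy => simp only [tmul_add, add_tmul, map_add, LinearMap.add_apply, hx, hy]
  | tmul x y =>
    simp [TensorProduct.tensorTensorTensorComm_tmul, LinearMap.mulLeft_apply,
      LinearMap.mulRight_apply]

lemma smashMul_incl_left (u : E) (b : A ⊗[k] E) :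
    smashMulMap k E A ((smashIncl k E A u) ⊗ₜ[k] b) = Lmap k E A u b := by
  induction b using TensorProduct.induction_on with
  | zero => simp
  | add x y hx hy => simp only [tmul_add, map_add, hx, hy]
  | tmul a' w' =>
    show smashMulMap k E A (((1 : A) ⊗ₜ[k] u) ⊗ₜ[k] (a' ⊗ₜ[k] w')) = _
    rw [smashMul_tmul]
    show _ = (TensorProduct.homTensorHomMap (RingHom.id k) A E A E)
      ((TensorProduct.map (endoAct k E A) (LinearMap.mul k E)) (comul u)) (a' ⊗ₜ[k] w')
    generalize (comul (R := k) (A := E)) u = c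
    induction c using TensorProduct.induction_on with
    | zero => simp
    | add x y hx hy => simp only [map_add, LinearMap.add_apply, hx, hy]
    | tmul x y =>
      simp [TensorProduct.homTensorHomMap_apply, LinearMap.mulLeft_apply,
        LinearMap.mulRight_apply, LinearMap.mul_apply']

lemma smashMul_incl_right
    (honeA : ∀ w : E, w • (1 : A) = (Coalgebra.counit (R := k) w) • (1 : A))
    (w : E) (b : A ⊗[k] E) :
    smashMulMap k E A (b ⊗ₜ[k] (smashIncl k E A w)) = Rmap k E A w b := by
  induction b using TensorProduct.induction_on with
  | zero => simp
  | add x y hx hy => simp only [add_tmul, map_add, hx, hy]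
  | tmul a' w' =>
    show smashMulMap k E A ((a' ⊗ₜ[k] w') ⊗ₜ[k] ((1 : A) ⊗ₜ[k] w)) = _
    rw [smashMul_tmul]
    have hf : (LinearMap.mulLeft k a') ∘ₗ ((endoAct k E A).flip (1 : A)) =
        (LinearMap.toSpanSingleton k A a') ∘ₗ (counit (R := k) (A := E)) :=
      LinearMap.ext fun x => by
        simp [honeA x, mul_smul_comm]
    have hsplit : TensorProduct.map ((LinearMap.toSpanSingleton k A a') ∘ₗ
          (counit (R := k) (A := E))) (LinearMap.mulRight k w) =
        TensorProduct.map (LinearMap.toSpanSingleton k A a') (LinearMap.mulRight k w) ∘ₗ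
          (counit (R := k) (A := E)).rTensor E := by
      rw [LinearMap.rTensor, ← TensorProduct.map_comp, LinearMap.comp_id]
    rw [hf, hsplit, LinearMap.comp_apply, Coalgebra.rTensor_counit_comul]
    simp

lemma Lmap_mul' :
    LinearMap.mul' k (Module.End k (A ⊗[k] E)) ∘ₗ
        TensorProduct.map (Lmap k E A) (Lmap k E A) =
      Lmap k E A ∘ₗ LinearMap.mul' k E := by
  apply TensorProduct.ext'; intro x y
  simp only [LinearMap.comp_apply, TensorProduct.map_tmul, LinearMap.mul'_apply]
  have key : ∀ c d : E ⊗[k] E,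
      (TensorProduct.homTensorHomMap (RingHom.id k) A E A E)
          ((TensorProduct.map (endoAct k E A) (LinearMap.mul k E)) c) *
        (TensorProduct.homTensorHomMap (RingHom.id k) A E A E)
          ((TensorProduct.map (endoAct k E A) (LinearMap.mul k E)) d) =
      (TensorProduct.homTensorHomMap (RingHom.id k) A E A E)
          ((TensorProduct.map (endoAct k E A) (LinearMap.mul k E)) (c * d)) := by
    intro c d
    induction c using TensorProduct.induction_on with
    | zero => simp
    | add c₁ c₂ h1 h2 => simp only [map_add, add_mul, h1, h2]
    | tmul x₁ y₁ =>
      induction d using TensorProduct.induction_on with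
      | zero => simp
      | add d₁ d₂ h1 h2 => simp only [map_add, mul_add, h1, h2]
      | tmul x₂ y₂ =>
        rw [Algebra.TensorProduct.tmul_mul_tmul]
        apply LinearMap.ext; intro b
        induction b using TensorProduct.induction_on with
        | zero => simp
        | add b₁ b₂ h1 h2 =>
          simp only [map_add, Module.End.mul_apply] at *
          simp only [h1, h2]
        | tmul a v =>
          simp [TensorProduct.homTensorHomMap_apply, Module.End.mul_apply,
            LinearMap.mul_apply', mul_smul, mul_assoc]
  simp only [Lmap_def]
  rw [key, Bialgebra.comul_mul]

lemma Lmap_one :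
    Lmap k E A ∘ₗ Algebra.linearMap k E = Algebra.linearMap k (Module.End k (A ⊗[k] E)) := by
  apply LinearMap.ext; intro r
  simp only [LinearMap.comp_apply, Algebra.linearMap_apply]
  rw [Algebra.algebraMap_eq_smul_one, map_smul, Algebra.algebraMap_eq_smul_one]
  congr 1
  apply LinearMap.ext; intro b
  rw [Lmap_def, Bialgebra.comul_one]
  show (TensorProduct.homTensorHomMap (RingHom.id k) A E A E)
    ((TensorProduct.map (endoAct k E A) (LinearMap.mul k E)) ((1:E) ⊗ₜ[k] (1:E))) b = b
  induction b using TensorProduct.induction_on with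
  | zero => simp
  | add x y hx hy =>
    simp only [map_add] at *
    simp only [hx, hy]
  | tmul a v =>
    show (TensorProduct.homTensorHomMap (RingHom.id k) A E A E)
      ((TensorProduct.map (endoAct k E A) (LinearMap.mul k E)) ((1 : E) ⊗ₜ[k] (1 : E)))
        (a ⊗ₜ[k] v) = _
    simp [TensorProduct.homTensorHomMap_apply, LinearMap.mul_apply']

lemma Rmap_antimul (x y : E) : Rmap k E A x * Rmap k E A y = Rmap k E A (y * x) := by
  apply LinearMap.ext; intro b
  induction b using TensorProduct.induction_on with
  | zero => simp
  | add b₁ b₂ h1 h2 => simp only [map_add, Module.End.mul_apply] at *; simp only [h1, h2]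
  | tmul a v => simp [Module.End.mul_apply, mul_assoc]

lemma Rmap_one :
    Rmap k E A ∘ₗ Algebra.linearMap k E = Algebra.linearMap k (Module.End k (A ⊗[k] E)) := by
  apply LinearMap.ext; intro r
  simp only [LinearMap.comp_apply, Algebra.linearMap_apply]
  rw [Algebra.algebraMap_eq_smul_one, map_smul, Algebra.algebraMap_eq_smul_one]
  congr 1
  apply LinearMap.ext; intro b
  induction b using TensorProduct.induction_on with
  | zero => simp
  | add x y hx hy => simp only [map_add] at *; simp only [hx, hy]
  | tmul a v => simp

lemma LR_comm (x y : E) :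
    Lmap k E A x * Rmap k E A y = Rmap k E A y * Lmap k E A x := by
  apply LinearMap.ext; intro b
  simp only [Module.End.mul_apply, Lmap_def]
  generalize (comul (R := k) (A := E)) x = c
  induction c using TensorProduct.induction_on with
  | zero => simp
  | add c₁ c₂ h1 h2 => simp only [map_add, LinearMap.add_apply, h1, h2]
  | tmul p q =>
    induction b using TensorProduct.induction_on with
    | zero => simp
    | add b₁ b₂ h1 h2 => simp only [map_add, h1, h2]
    | tmul a v =>
      simp [TensorProduct.homTensorHomMap_apply, LinearMap.mul_apply', mul_assoc]

section SinvPart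
variable {k E : Type*} [CommRing k] [Ring E] [HopfAlgebra k E]
local notation "Sₑ" => HopfAlgebra.antipode (R := k) (A := E)
variable (Sinv : E →ₗ[k] E)
    (hS₁ : ∀ x : E, Sinv (HopfAlgebra.antipode (R := k) x) = x)
    (hS₂ : ∀ x : E, HopfAlgebra.antipode (R := k) (Sinv x) = x)

include hS₁ in
lemma comul_Sinv_aux (v : E) :
    (TensorProduct.comm k E E)
        (TensorProduct.map Sinv Sinv (comul (Sₑ v))) = comul v := by
  have hc := LinearMap.congr_fun (comul_antipode k E) v
  simp only [LinearMap.comp_apply, LinearEquiv.coe_coe] at hc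
  rw [hc]
  generalize (comul (R := k) (A := E)) v = t
  induction t using TensorProduct.induction_on with
  | zero => simp only [map_zero]
  | add x y hx hy => simp only [map_add, hx, hy]
  | tmul x y => simp [hS₁]

include hS₁ hS₂ in
lemma comul_Sinv_apply (u : E) :
    comul (Sinv u) = (TensorProduct.comm k E E)
      (TensorProduct.map Sinv Sinv (comul u)) := by
  have h := comul_Sinv_aux Sinv hS₁ (Sinv u)
  rw [hS₂ u] at h
  exact h.symm

include hS₂ in
lemma counit_Sinv_apply (u : E) :
    counit (R := k) (Sinv u) = counit (R := k) u := by
  have h := LinearMap.congr_fun (counit_antipode k E) (Sinv u)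
  simp only [LinearMap.comp_apply] at h
  rw [hS₂ u] at h
  exact h.symm

include hS₁ hS₂ in
lemma cop_antipode_apply (u : E) :
    LinearMap.mul' k E (Sinv.rTensor E ((TensorProduct.comm k E E) (comul u))) =
      algebraMap k E (counit (R := k) u) := by
  have hc := LinearMap.congr_fun (comul_antipode k E) (Sinv u)
  simp only [LinearMap.comp_apply, LinearEquiv.coe_coe] at hc
  rw [hS₂ u] at hc
  rw [hc]
  have key : ∀ t : E ⊗[k] E,
      LinearMap.mul' k E (Sinv.rTensor E ((TensorProduct.comm k E E)
        ((TensorProduct.comm k E E) ((TensorProduct.map Sₑ Sₑ) t)))) =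
      LinearMap.mul' k E ((Sₑ).lTensor E t) := by
    intro t
    induction t using TensorProduct.induction_on with
    | zero => simp only [map_zero]
    | add x y hx hy => simp only [map_add, hx, hy]
    | tmul x y => simp [hS₁]
  rw [key, HopfAlgebra.mul_antipode_lTensor_comul_apply,
    counit_Sinv_apply Sinv hS₂ u]

end SinvPart

section SmashFinal
variable {k E A : Type*} [CommRing k] [Ring E] [HopfAlgebra k E]
    [Ring A] [Algebra k A] [Module E A] [IsScalarTower k E A] [SMulCommClass E k A]
local notation "Sₑ" => HopfAlgebra.antipode (R := k) (A := E)

lemma adjAct_eq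
    (honeA : ∀ w : E, w • (1 : A) = (Coalgebra.counit (R := k) w) • (1 : A)) :
    adjAct k E A = TensorProduct.lift (conv (Lmap k E A ∘ₗ Sₑ) (Rmap k E A)) := by
  apply TensorProduct.ext'; intro u b
  simp only [adjAct, LinearMap.comp_apply, TensorProduct.map_tmul, LinearMap.id_coe, id_eq,
    TensorProduct.lift.tmul, conv_apply, LinearEquiv.coe_coe]
  generalize (comul (R := k) (A := E)) u = c
  induction c using TensorProduct.induction_on with
  | zero => simp only [map_zero, zero_tmul, LinearMap.zero_apply]
  | add x y hx hy => simp only [map_add, add_tmul, LinearMap.add_apply, hx, hy]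
  | tmul x y =>
    simp only [LinearEquiv.coe_coe, TensorProduct.assoc_tmul, TensorProduct.map_tmul,
      LinearMap.id_coe, id_eq, TensorProduct.comm_tmul, LinearMap.comp_apply,
      LinearMap.mul'_apply, Module.End.mul_apply]
    rw [smashMul_incl_right honeA, smashMul_incl_left]

lemma conv_R_RSinv (Sinv : E →ₗ[k] E)
    (hS₁ : ∀ x : E, Sinv (HopfAlgebra.antipode (R := k) x) = x)
    (hS₂ : ∀ x : E, HopfAlgebra.antipode (R := k) (Sinv x) = x) :
    conv (Rmap k E A) (Rmap k E A ∘ₗ Sinv) = cunit := by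
  apply LinearMap.ext; intro u
  rw [conv_apply]
  have h1 : TensorProduct.map (Rmap k E A) (Rmap k E A ∘ₗ Sinv) =
      TensorProduct.map (Rmap k E A) (Rmap k E A) ∘ₗ Sinv.lTensor E := by
    rw [LinearMap.lTensor, ← TensorProduct.map_comp, LinearMap.comp_id]
  rw [h1, LinearMap.comp_apply]
  have key : ∀ t : E ⊗[k] E,
      LinearMap.mul' k (Module.End k (A ⊗[k] E))
          ((TensorProduct.map (Rmap k E A) (Rmap k E A)) (Sinv.lTensor E t)) =
        Rmap k E A (LinearMap.mul' k E (Sinv.rTensor E ((TensorProduct.comm k E E) t))) := by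
    intro t
    induction t using TensorProduct.induction_on with
    | zero => simp only [map_zero]
    | add x y hx hy => simp only [map_add, hx, hy]
    | tmul x y =>
      simp only [LinearMap.lTensor_tmul, LinearMap.rTensor_tmul, TensorProduct.comm_tmul,
        TensorProduct.map_tmul, LinearMap.mul'_apply]
      exact Rmap_antimul x (Sinv y)
  rw [key, cop_antipode_apply Sinv hS₁ hS₂ u]
  exact LinearMap.congr_fun (Rmap_one (k := k) (E := E) (A := A)) (counit (R := k) u)

lemma HSinv_eq (Sinv : E →ₗ[k] E)
    (hS₁ : ∀ x : E, Sinv (HopfAlgebra.antipode (R := k) x) = x)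
    (hS₂ : ∀ x : E, HopfAlgebra.antipode (R := k) (Sinv x) = x) :
    conv (Lmap k E A ∘ₗ Sₑ) (Rmap k E A) ∘ₗ Sinv =
      convOp (Rmap k E A ∘ₗ Sinv) (Lmap k E A) := by
  apply LinearMap.ext; intro u
  rw [LinearMap.comp_apply, conv_apply, convOp_apply,
    comul_Sinv_apply Sinv hS₁ hS₂ u]
  generalize (comul (R := k) (A := E)) u = t
  induction t using TensorProduct.induction_on with
  | zero => simp only [map_zero]
  | add x y hx hy => simp only [map_add, hx, hy]
  | tmul x y =>
    simp only [TensorProduct.comm_tmul, TensorProduct.map_tmul, LinearMap.comp_apply,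
      LinearMap.mul'_apply, hS₂]

lemma conv_R_HSinv (Sinv : E →ₗ[k] E)
    (hS₁ : ∀ x : E, Sinv (HopfAlgebra.antipode (R := k) x) = x)
    (hS₂ : ∀ x : E, HopfAlgebra.antipode (R := k) (Sinv x) = x) :
    conv (Rmap k E A) (conv (Lmap k E A ∘ₗ Sₑ) (Rmap k E A) ∘ₗ Sinv) = Lmap k E A := by
  rw [HSinv_eq Sinv hS₁ hS₂,
    conv_convOp (Rmap k E A) (Rmap k E A ∘ₗ Sinv) (Lmap k E A)
      (fun x y => LR_comm x (Sinv y)),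
    conv_R_RSinv Sinv hS₁ hS₂, conv_cunit_left]

lemma smashIncl_left_pf :
    smashMulMap k E A ∘ₗ
        (TensorProduct.map (smashIncl k E A) (LinearMap.id (R := k) (M := A ⊗[k] E))) =
      TensorProduct.lift (Lmap k E A) :=
  TensorProduct.ext' fun u b => by
    simp only [LinearMap.comp_apply, TensorProduct.map_tmul, LinearMap.id_coe, id_eq,
      TensorProduct.lift.tmul]
    exact smashMul_incl_left u b

lemma lift_mulLeft (f : A ⊗[k] E →ₗ[k] A ⊗[k] E) (g : E →ₗ[k] Module.End k (A ⊗[k] E)) :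
    TensorProduct.lift (LinearMap.mulLeft k f ∘ₗ g) = f ∘ₗ TensorProduct.lift g :=
  TensorProduct.ext' fun u b => by
    simp [Module.End.mul_apply]

end SmashFinal

section Assembly
variable {k E A : Type*} [CommRing k] [Ring E] [HopfAlgebra k E]
    [Ring A] [Algebra k A] [Module E A] [IsScalarTower k E A] [SMulCommClass E k A]
local notation "Sₑ" => HopfAlgebra.antipode (R := k) (A := E)

lemma assembly
    (honeA : ∀ w : E, w • (1 : A) = (Coalgebra.counit (R := k) w) • (1 : A))
    (Sinv : E →ₗ[k] E) (f : A ⊗[k] E →ₗ[k] A ⊗[k] E) :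
    (smashMulMap k E A) ∘ₗ
        (TensorProduct.map (smashIncl k E A) LinearMap.id) ∘ₗ
        (TensorProduct.map LinearMap.id (adjAct k E A)) ∘ₗ
        (TensorProduct.map LinearMap.id (TensorProduct.map LinearMap.id
          (f ∘ₗ (adjAct k E A) ∘ₗ (TensorProduct.map Sinv LinearMap.id)))) ∘ₗ
        (TensorProduct.map LinearMap.id
          (TensorProduct.assoc k E E (A ⊗[k] E)).toLinearMap) ∘ₗ
        (TensorProduct.assoc k E (E ⊗[k] E) (A ⊗[k] E)).toLinearMap ∘ₗ
        (TensorProduct.map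
          ((TensorProduct.map LinearMap.id (Coalgebra.comul (R := k) (A := E))) ∘ₗ
            (Coalgebra.comul (R := k) (A := E)))
          LinearMap.id) =
      TensorProduct.lift (conv (Lmap k E A)
        (conv (conv (Lmap k E A ∘ₗ Sₑ) (Rmap k E A))
          (LinearMap.mulLeft k f ∘ₗ conv (Lmap k E A ∘ₗ Sₑ) (Rmap k E A) ∘ₗ Sinv))) := by
  have hadj := adjAct_eq (k := k) (E := E) (A := A) honeA
  apply TensorProduct.ext'; intro u b
  simp only [LinearMap.comp_apply, TensorProduct.map_tmul, LinearMap.id_coe, id_eq,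
    TensorProduct.lift.tmul, conv_apply, LinearEquiv.coe_coe]
  generalize (comul (R := k) (A := E)) u = c
  induction c using TensorProduct.induction_on with
  | zero => simp only [map_zero, zero_tmul, LinearMap.zero_apply]
  | add x y hx hy => simp only [map_add, add_tmul, LinearMap.add_apply, hx, hy]
  | tmul x y =>
    simp only [TensorProduct.map_tmul, LinearMap.id_coe, id_eq, LinearMap.mul'_apply,
      Module.End.mul_apply, conv_apply]
    generalize (comul (R := k) (A := E)) y = d
    induction d using TensorProduct.induction_on with
    | zero => simp only [map_zero, tmul_zero, zero_tmul, LinearMap.zero_apply, mul_zero,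
        LinearMap.map_zero]
    | add p q hp hq => simp only [map_add, tmul_add, add_tmul, LinearMap.add_apply, mul_add,
        LinearMap.map_add, hp, hq]
    | tmul p q =>
      simp only [LinearEquiv.coe_coe, TensorProduct.assoc_tmul, TensorProduct.map_tmul,
        LinearMap.id_coe, id_eq, LinearMap.comp_apply, hadj, TensorProduct.lift.tmul,
        LinearMap.mul'_apply, Module.End.mul_apply, LinearMap.mulLeft_apply]
      rw [smashMul_incl_left]

end Assembly

end ST17

set_option maxHeartbeats 1000000 in
set_option synthInstance.maxHeartbeats 400000 in
theorem right_E_linear_implies_braided_left_E_linear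
    (k E : Type*) [CommRing k] [Ring E] [HopfAlgebra k E]
    (A : Type*) [Ring A] [Algebra k A] [Module E A] [IsScalarTower k E A]
    [SMulCommClass E k A]
    -- the antipode is bijective, with inverse `Sinv`
    (Sinv : E →ₗ[k] E)
    (hS₁ : ∀ x : E, Sinv (HopfAlgebra.antipode (R := k) x) = x)
    (hS₂ : ∀ x : E, HopfAlgebra.antipode (R := k) (Sinv x) = x)
    -- `A` is an `E`-module algebra
    (hmulA : ∀ w : E, (endoAct k E A w) ∘ₗ (LinearMap.mul' k A)
        = (LinearMap.mul' k A) ∘ₗ (actT k E A A (Coalgebra.comul (R := k) w)))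
    (honeA : ∀ w : E, w • (1 : A) = (Coalgebra.counit (R := k) w) • (1 : A))
    -- `f : B → B` is right `E`-linear: `f(b w) = f(b) w`
    (f : A ⊗[k] E →ₗ[k] A ⊗[k] E)
    (hf : ∀ (w : E) (b : A ⊗[k] E),
      f (smashMulMap k E A (b ⊗ₜ[k] (smashIncl k E A w)))
        = smashMulMap k E A ((f b) ⊗ₜ[k] (smashIncl k E A w))) :
    -- `f(w b) = w₁ ((w₂)₁ · f(S⁻¹((w₂)₂) · b))`, as maps `E ⊗ B → B`
    f ∘ₗ (smashMulMap k E A) ∘ₗ (TensorProduct.map (smashIncl k E A) LinearMap.id)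
      = (smashMulMap k E A) ∘ₗ
        (TensorProduct.map (smashIncl k E A) LinearMap.id) ∘ₗ
        (TensorProduct.map LinearMap.id (adjAct k E A)) ∘ₗ
        (TensorProduct.map LinearMap.id (TensorProduct.map LinearMap.id
          (f ∘ₗ (adjAct k E A) ∘ₗ (TensorProduct.map Sinv LinearMap.id)))) ∘ₗ
        (TensorProduct.map LinearMap.id
          (TensorProduct.assoc k E E (A ⊗[k] E)).toLinearMap) ∘ₗ
        (TensorProduct.assoc k E (E ⊗[k] E) (A ⊗[k] E)).toLinearMap ∘ₗ
        (TensorProduct.map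
          ((TensorProduct.map LinearMap.id (Coalgebra.comul (R := k) (A := E))) ∘ₗ
            (Coalgebra.comul (R := k) (A := E)))
          LinearMap.id) := by
  classical
  have hfR : ∀ w : E, ST17.Rmap k E A w * f = f * ST17.Rmap k E A w := by
    intro w
    apply LinearMap.ext; intro b
    simp only [Module.End.mul_apply]
    rw [← ST17.smashMul_incl_right honeA, ← ST17.smashMul_incl_right honeA, ← hf w b]
  have hcore : ST17.conv (ST17.Lmap k E A)
      (ST17.conv (ST17.conv (ST17.Lmap k E A ∘ₗ HopfAlgebra.antipode (R := k)) (ST17.Rmap k E A))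
        (LinearMap.mulLeft k f ∘ₗ
          ST17.conv (ST17.Lmap k E A ∘ₗ HopfAlgebra.antipode (R := k))
            (ST17.Rmap k E A) ∘ₗ Sinv)) =
      LinearMap.mulLeft k f ∘ₗ ST17.Lmap k E A := by
    rw [← ST17.conv_assoc, ← ST17.conv_assoc,
      ST17.conv_antipode_right (ST17.Lmap k E A) ST17.Lmap_mul' ST17.Lmap_one,
      ST17.conv_cunit_left]
    rw [show LinearMap.mulLeft k f ∘ₗ
        ST17.conv (ST17.Lmap k E A ∘ₗ HopfAlgebra.antipode (R := k)) (ST17.Rmap k E A) ∘ₗ Sinv =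
        LinearMap.mulLeft k f ∘ₗ
        (ST17.conv (ST17.Lmap k E A ∘ₗ HopfAlgebra.antipode (R := k))
          (ST17.Rmap k E A) ∘ₗ Sinv)
      from rfl]
    rw [ST17.conv_mulLeft _ _ _ hfR, ST17.conv_R_HSinv Sinv hS₁ hS₂]
  rw [ST17.assembly honeA Sinv f, hcore, ST17.lift_mulLeft, ST17.smashIncl_left_pf]
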